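/- Let k'/k be a finite extension of fields and let G be a subset of (k')^×. Let E be the intersection of all k-subspaces V of k' such that 1 ∈ V and g·V ⊆ V for every g ∈ G. Then E is an intermediate field of k'/k (i.e. a subfield of k' containing k) and G ⊆ E. -/

import Mathlib

/-- Let k'/k be a finite extension of fields and G a subset of (k')ˣ.
Let E be the intersection of all k-subspaces V of k' with 1 ∈ V and g·V ⊆ V for all
g ∈ G.  Then E is an intermediate field of k'/k and G ⊆ E. -/
theorem stmt_10 (k k' : Type*) [Field k] [Field k'] [Algebra k k']
    [FiniteDimensional k k'] (G : Set k'ˣ) (E : Submodule k k')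
    (hE : E = sInf {V : Submodule k k' |
        (1 : k') ∈ V ∧ ∀ g ∈ G, ∀ v ∈ V, ((g : k'ˣ) : k') * v ∈ V}) :
    (∃ F : IntermediateField k k', (F : Set k') = (E : Set k')) ∧
    ∀ g ∈ G, ((g : k'ˣ) : k') ∈ E := by
  set 𝒮 : Set (Submodule k k') := {V : Submodule k k' |
        (1 : k') ∈ V ∧ ∀ g ∈ G, ∀ v ∈ V, ((g : k'ˣ) : k') * v ∈ V} with h𝒮
  -- E itself satisfies the defining property
  have hE1 : (1 : k') ∈ E := by
    rw [hE, Submodule.mem_sInf]; exact fun V hV => hV.1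
  have hEmul : ∀ g ∈ G, ∀ v ∈ E, ((g : k'ˣ) : k') * v ∈ E := by
    intro g hg v hv
    rw [hE, Submodule.mem_sInf]
    intro V hV
    rw [hE, Submodule.mem_sInf] at hv
    exact hV.2 g hg v (hv V hV)
  have hGE : ∀ g ∈ G, ((g : k'ˣ) : k') ∈ E := by
    intro g hg
    simpa using hEmul g hg 1 hE1
  refine ⟨?_, hGE⟩
  set S : Set k' := (fun g : k'ˣ => (g : k')) '' G with hS
  -- E = span of the monoid closure of S
  have key : E = Submodule.span k (Submonoid.closure S : Set k') := by
    apply le_antisymm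
    · rw [hE]
      apply sInf_le
      constructor
      · exact Submodule.subset_span (Submonoid.one_mem _)
      · intro g hg v hv
        induction hv using Submodule.span_induction with
        | mem x hx =>
            exact Submodule.subset_span
              (Submonoid.mul_mem _ (Submonoid.subset_closure ⟨g, hg, rfl⟩) hx)
        | zero => simp
        | add x y _ _ hx hy => rw [mul_add]; exact Submodule.add_mem _ hx hy
        | smul c x _ hx => rw [mul_smul_comm]; exact Submodule.smul_mem _ c hx
    · rw [Submodule.span_le]
      intro m hm
      have : ∀ v ∈ E, m * v ∈ E := by
        induction hm using Submonoid.closure_induction with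
        | mem x hx =>
            obtain ⟨g, hg, rfl⟩ := hx
            exact hEmul g hg
        | one => simp
        | mul x y _ _ hx hy =>
            intro v hv
            rw [mul_assoc]
            exact hx _ (hy v hv)
      simpa using this 1 hE1
  -- the intermediate field
  refine ⟨IntermediateField.adjoin k S, ?_⟩
  have halg : ∀ x ∈ S, IsAlgebraic k x := fun x _ => Algebra.IsAlgebraic.isAlgebraic x
  have h1 : (IntermediateField.adjoin k S).toSubalgebra = Algebra.adjoin k S :=
    IntermediateField.adjoin_toSubalgebra_of_isAlgebraic halg
  have h2 : Subalgebra.toSubmodule (Algebra.adjoin k S) =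
      Submodule.span k (Submonoid.closure S : Set k') := Algebra.adjoin_eq_span k S
  have : (IntermediateField.adjoin k S : Set k') = (Algebra.adjoin k S : Set k') := by
    rw [← h1]; rfl
  rw [this, key, ← h2]
  rfl
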